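/- Let X₁, X₂, …, X_N be i.i.d. Bernoulli(p) random variables, let S_n = (1/n) Σ_{i=1}^{n} X_i, and let P̄_N = (1/N) Σ_{n=1}^{N} S_n. Then Var(P̄_N) = (1/N²) Σ_{i=1}^{N} (Σ_{j=i}^{N} 1/j)² · p(1 − p), and this is at most ((H_N)²/N) · p(1 − p) ≤ ((1 + log N)²/N) · p(1 − p), where H_N = Σ_{j=1}^{N} 1/j is the N-th harmonic number. In particular Var(P̄_N) → 0 as N → ∞. -/

import Mathlib

open MeasureTheory ProbabilityTheory Filter

/-- The Bernoulli(p) distribution on `ℝ`: mass `p` at `1` and mass `1 - p` at `0`. -/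
noncomputable def bernoulliMeasure (p : ℝ) : Measure ℝ :=
  ENNReal.ofReal p • Measure.dirac 1 + ENNReal.ofReal (1 - p) • Measure.dirac 0

section Aux

variable {p : ℝ}

lemma bern_integrable (f : ℝ → ℝ) (hf : Measurable f) :
    Integrable f (bernoulliMeasure p) := by
  refine Integrable.add_measure ?_ ?_
  · exact (((integrable_const (f 1)).congr (ae_eq_dirac' hf).symm).smul_measure
      ENNReal.ofReal_ne_top)
  · exact (((integrable_const (f 0)).congr (ae_eq_dirac' hf).symm).smul_measure
      ENNReal.ofReal_ne_top)

lemma bern_integral (hp0 : 0 ≤ p) (hp1 : p ≤ 1) (f : ℝ → ℝ) (hf : Measurable f) :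
    ∫ x, f x ∂(bernoulliMeasure p) = p * f 1 + (1 - p) * f 0 := by
  rw [_root_.bernoulliMeasure, integral_add_measure
      (((integrable_const (f 1)).congr (ae_eq_dirac' hf).symm).smul_measure
        ENNReal.ofReal_ne_top)
      (((integrable_const (f 0)).congr (ae_eq_dirac' hf).symm).smul_measure
        ENNReal.ofReal_ne_top),
    integral_smul_measure, integral_smul_measure, integral_dirac, integral_dirac,
    ENNReal.toReal_ofReal hp0, ENNReal.toReal_ofReal (by linarith : (0:ℝ) ≤ 1 - p)]
  simp [smul_eq_mul]

end Aux

/-- **Variance bound for the NFR estimator (Lemma 2, variance part).**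
Let `X 1, X 2, …` be i.i.d. Bernoulli(p), `S n = (1/n) ∑_{i=1}^n X i`, and
`P̄_N = (1/N) ∑_{n=1}^N S n`.  Then
`Var(P̄_N) = (1/N²) ∑_{i=1}^N (∑_{j=i}^N 1/j)² p(1-p)`, which is at most
`(H_N)²/N · p(1-p) ≤ (1 + log N)²/N · p(1-p)` where `H_N` is the `N`-th harmonic
number; in particular `Var(P̄_N) → 0` as `N → ∞`. -/
theorem average_of_running_averages_variance {Ω : Type*} [MeasurableSpace Ω]
    (μ : Measure Ω) [IsProbabilityMeasure μ]
    (p : ℝ) (hp0 : 0 ≤ p) (hp1 : p ≤ 1)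
    (X : ℕ → Ω → ℝ)
    (hmeas : ∀ i, Measurable (X i))
    (hdist : ∀ i, Measure.map (X i) μ = _root_.bernoulliMeasure p)
    (hindep : iIndepFun X μ) :
    (∀ N : ℕ, 0 < N →
      variance (fun ω => (1 / (N : ℝ)) *
          ∑ n ∈ Finset.Icc 1 N, (1 / (n : ℝ)) * ∑ i ∈ Finset.Icc 1 n, X i ω) μ
        = (1 / (N : ℝ) ^ 2) *
            ∑ i ∈ Finset.Icc 1 N, (∑ j ∈ Finset.Icc i N, 1 / (j : ℝ)) ^ 2 * (p * (1 - p)) ∧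
      (1 / (N : ℝ) ^ 2) *
          ∑ i ∈ Finset.Icc 1 N, (∑ j ∈ Finset.Icc i N, 1 / (j : ℝ)) ^ 2 * (p * (1 - p))
        ≤ (∑ j ∈ Finset.Icc 1 N, 1 / (j : ℝ)) ^ 2 / N * (p * (1 - p)) ∧
      (∑ j ∈ Finset.Icc 1 N, 1 / (j : ℝ)) ^ 2 / N * (p * (1 - p))
        ≤ (1 + Real.log N) ^ 2 / N * (p * (1 - p))) ∧
    Tendsto (fun N : ℕ =>
        variance (fun ω => (1 / (N : ℝ)) *
          ∑ n ∈ Finset.Icc 1 N, (1 / (n : ℝ)) * ∑ i ∈ Finset.Icc 1 n, X i ω) μ)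
      atTop (nhds 0) := by
  have hq0 : (0:ℝ) ≤ 1 - p := by linarith
  have hpq : (0:ℝ) ≤ p * (1 - p) := mul_nonneg hp0 hq0
  -- integrability of X i and X i ^ 2
  have hXint : ∀ i, Integrable (X i) μ := by
    intro i
    have := (integrable_map_measure aestronglyMeasurable_id (hmeas i).aemeasurable).mp
      (by rw [hdist i]; exact bern_integrable _ measurable_id)
    simpa [Function.comp] using this
  have hXsqint : ∀ i, Integrable (fun ω => X i ω ^ 2) μ := by
    intro i
    have := (integrable_map_measure (measurable_id.pow_const 2).aestronglyMeasurable
      (hmeas i).aemeasurable).mp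
      (by rw [hdist i]; exact bern_integrable _ (measurable_id.pow_const 2))
    exact this
  have hL2 : ∀ i, MemLp (X i) 2 μ := fun i =>
    (memLp_two_iff_integrable_sq (hmeas i).aestronglyMeasurable).mpr (hXsqint i)
  -- mean and second moment
  have hmean : ∀ i, ∫ ω, X i ω ∂μ = p := by
    intro i
    have := integral_map (μ := μ) (hmeas i).aemeasurable
      (f := fun x : ℝ => x) aestronglyMeasurable_id
    rw [hdist i] at this
    rw [← this, bern_integral hp0 hp1 (fun x : ℝ => x) measurable_id]
    ring
  have hsq : ∀ i, ∫ ω, X i ω ^ 2 ∂μ = p := by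
    intro i
    have := integral_map (μ := μ) (hmeas i).aemeasurable
      (f := fun x : ℝ => x ^ 2) (measurable_id.pow_const 2).aestronglyMeasurable
    rw [hdist i] at this
    rw [← this, bern_integral hp0 hp1 (fun x : ℝ => x ^ 2) (measurable_id.pow_const 2)]
    ring
  -- variance of each X i
  have hvarX : ∀ i, variance (X i) μ = p * (1 - p) := by
    intro i
    rw [variance_eq_sub (hL2 i)]
    have h2 : ∫ ω, (X i ^ 2) ω ∂μ = p := by
      simpa [Pi.pow_apply] using hsq i
    rw [h2, hmean i]
    ring
  -- rearrangement of the double sum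
  have hswap : ∀ N : ℕ, ∀ ω,
      (1 / (N : ℝ)) * ∑ n ∈ Finset.Icc 1 N, (1 / (n : ℝ)) * ∑ i ∈ Finset.Icc 1 n, X i ω
        = ∑ i ∈ Finset.Icc 1 N,
            ((1 / (N : ℝ)) * ∑ j ∈ Finset.Icc i N, 1 / (j : ℝ)) * X i ω := by
    intro N ω
    have h1 : ∑ n ∈ Finset.Icc 1 N, (1 / (n : ℝ)) * ∑ i ∈ Finset.Icc 1 n, X i ω
        = ∑ i ∈ Finset.Icc 1 N, (∑ j ∈ Finset.Icc i N, 1 / (j : ℝ)) * X i ω := by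
      have := Finset.sum_comm' (s := Finset.Icc 1 N) (t := fun n => Finset.Icc 1 n)
        (t' := Finset.Icc 1 N) (s' := fun i => Finset.Icc i N)
        (f := fun n i => (1 / (n : ℝ)) * X i ω)
        (by intro n i; simp only [Finset.mem_Icc]; omega)
      calc ∑ n ∈ Finset.Icc 1 N, (1 / (n : ℝ)) * ∑ i ∈ Finset.Icc 1 n, X i ω
          = ∑ n ∈ Finset.Icc 1 N, ∑ i ∈ Finset.Icc 1 n, (1 / (n : ℝ)) * X i ω := by
            simp [Finset.mul_sum]
        _ = ∑ i ∈ Finset.Icc 1 N, ∑ n ∈ Finset.Icc i N, (1 / (n : ℝ)) * X i ω := this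
        _ = ∑ i ∈ Finset.Icc 1 N, (∑ j ∈ Finset.Icc i N, 1 / (j : ℝ)) * X i ω := by
            simp [Finset.sum_mul]
    rw [h1, Finset.mul_sum]
    congr 1; ext i; ring
  -- the main variance computation
  have hvar : ∀ N : ℕ,
      variance (fun ω => (1 / (N : ℝ)) *
          ∑ n ∈ Finset.Icc 1 N, (1 / (n : ℝ)) * ∑ i ∈ Finset.Icc 1 n, X i ω) μ
        = (1 / (N : ℝ) ^ 2) *
            ∑ i ∈ Finset.Icc 1 N, (∑ j ∈ Finset.Icc i N, 1 / (j : ℝ)) ^ 2 * (p * (1 - p)) := by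
    intro N
    set c : ℕ → ℝ := fun i => (1 / (N : ℝ)) * ∑ j ∈ Finset.Icc i N, 1 / (j : ℝ) with hc
    have heq : (fun ω => (1 / (N : ℝ)) *
        ∑ n ∈ Finset.Icc 1 N, (1 / (n : ℝ)) * ∑ i ∈ Finset.Icc 1 n, X i ω)
        = ∑ i ∈ Finset.Icc 1 N, (fun ω => c i * X i ω) := by
      funext ω
      rw [hswap N ω]
      simp only [Finset.sum_apply]
      rfl
    rw [heq]
    have hsum : variance (∑ i ∈ Finset.Icc 1 N, fun ω => c i * X i ω) μ
        = ∑ i ∈ Finset.Icc 1 N, variance (fun ω => c i * X i ω) μ := by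
      refine IndepFun.variance_sum (fun i _ => (hL2 i).const_mul (c i)) ?_
      intro i _ j _ hij
      exact (hindep.indepFun hij).comp (measurable_const_mul (c i))
        (measurable_const_mul (c j))
    rw [hsum]
    rw [Finset.mul_sum]
    refine Finset.sum_congr rfl fun i _ => ?_
    have : (fun ω => c i * X i ω) = c i • X i := by funext ω; simp [smul_eq_mul]
    rw [this, variance_smul, hvarX i, hc]
    ring
  have key : ∀ N : ℕ, 0 < N →
      variance (fun ω => (1 / (N : ℝ)) *
          ∑ n ∈ Finset.Icc 1 N, (1 / (n : ℝ)) * ∑ i ∈ Finset.Icc 1 n, X i ω) μ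
        = (1 / (N : ℝ) ^ 2) *
            ∑ i ∈ Finset.Icc 1 N, (∑ j ∈ Finset.Icc i N, 1 / (j : ℝ)) ^ 2 * (p * (1 - p)) ∧
      (1 / (N : ℝ) ^ 2) *
          ∑ i ∈ Finset.Icc 1 N, (∑ j ∈ Finset.Icc i N, 1 / (j : ℝ)) ^ 2 * (p * (1 - p))
        ≤ (∑ j ∈ Finset.Icc 1 N, 1 / (j : ℝ)) ^ 2 / N * (p * (1 - p)) ∧
      (∑ j ∈ Finset.Icc 1 N, 1 / (j : ℝ)) ^ 2 / N * (p * (1 - p))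
        ≤ (1 + Real.log N) ^ 2 / N * (p * (1 - p)) := by
    intro N hN
    have hN0 : (0:ℝ) < N := by exact_mod_cast hN
    set H : ℝ := ∑ j ∈ Finset.Icc 1 N, 1 / (j : ℝ) with hH
    have hH0 : 0 ≤ H := Finset.sum_nonneg fun j _ => by positivity
    have hcle : ∀ i, (∑ j ∈ Finset.Icc i N, 1 / (j : ℝ)) ≤ H := by
      intro i
      rcases Nat.lt_or_ge i 1 with h | h
      · have hi0 : i = 0 := by omega
        subst hi0
        have hins : Finset.Icc 0 N = insert 0 (Finset.Icc 1 N) := by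
          ext j; simp only [Finset.mem_Icc, Finset.mem_insert]; omega
        rw [hins, Finset.sum_insert (by simp)]
        simp [hH]
      · exact Finset.sum_le_sum_of_subset_of_nonneg
          (Finset.Icc_subset_Icc_left h) (fun j _ _ => by positivity)
    have hcnn : ∀ i, (0:ℝ) ≤ ∑ j ∈ Finset.Icc i N, 1 / (j : ℝ) :=
      fun i => Finset.sum_nonneg fun j _ => by positivity
    refine ⟨hvar N, ?_, ?_⟩
    · have hsumle : ∑ i ∈ Finset.Icc 1 N, (∑ j ∈ Finset.Icc i N, 1 / (j : ℝ)) ^ 2 * (p * (1 - p))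
          ≤ N * (H ^ 2 * (p * (1 - p))) := by
        calc ∑ i ∈ Finset.Icc 1 N, (∑ j ∈ Finset.Icc i N, 1 / (j : ℝ)) ^ 2 * (p * (1 - p))
            ≤ ∑ _i ∈ Finset.Icc 1 N, H ^ 2 * (p * (1 - p)) := by
              refine Finset.sum_le_sum fun i _ => ?_
              exact mul_le_mul_of_nonneg_right
                (pow_le_pow_left₀ (hcnn i) (hcle i) 2) hpq
          _ = N * (H ^ 2 * (p * (1 - p))) := by
              rw [Finset.sum_const, Nat.card_Icc]; simp
      calc (1 / (N : ℝ) ^ 2) *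
            ∑ i ∈ Finset.Icc 1 N, (∑ j ∈ Finset.Icc i N, 1 / (j : ℝ)) ^ 2 * (p * (1 - p))
          ≤ (1 / (N : ℝ) ^ 2) * (N * (H ^ 2 * (p * (1 - p)))) := by
            exact mul_le_mul_of_nonneg_left hsumle (by positivity)
        _ = H ^ 2 / N * (p * (1 - p)) := by field_simp
    · have hHle : H ≤ 1 + Real.log N := by
        have := harmonic_le_one_add_log N
        rw [harmonic_eq_sum_Icc] at this
        push_cast at this
        simpa [hH, one_div] using this
      gcongr
  refine ⟨key, ?_⟩
  -- tendsto part
  have hg : Tendsto (fun N : ℕ => (1 + Real.log N) ^ 2 / N * (p * (1 - p)))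
      atTop (nhds 0) := by
    have hr : Tendsto (fun x : ℝ => (1 + Real.log x) ^ 2 / x) atTop (nhds 0) := by
      have hA := Real.tendsto_pow_log_div_mul_add_atTop 1 0 1 one_ne_zero
      have hB := Real.tendsto_pow_log_div_mul_add_atTop 1 0 2 one_ne_zero
      have hC : Tendsto (fun x : ℝ => x⁻¹) atTop (nhds 0) := tendsto_inv_atTop_zero
      have hsum := hC.add ((hA.const_mul 2).add hB)
      simp only [add_zero, mul_zero, zero_add] at hsum
      refine hsum.congr fun x => ?_
      ring
    have := (hr.comp tendsto_natCast_atTop_atTop).mul_const (p * (1 - p))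
    simpa using this
  refine squeeze_zero' (Eventually.of_forall fun N => variance_nonneg _ μ) ?_ hg
  filter_upwards [eventually_gt_atTop 0] with N hN
  obtain ⟨h1, h2, h3⟩ := key N hN
  rw [h1]; exact le_trans h2 h3
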